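/- Let X₁, …, Xₘ ∈ C_v be pairwise distinct sets in the partition of s⁻¹(v), with X_{n+1}, …, Xₘ ∉ S, and let e_i ∈ X_i for 1 ≤ i ≤ n. Then in the branching system constructed in Theorem 3.1 (via nested interval partitions), the set R_{e₁} ∩ … ∩ R_{eₙ} ∩ (D_v \ ⋃_{e∈X_{n+1}} R_e) ∩ … ∩ (D_v \ ⋃_{e∈Xₘ} R_e) is nonempty. -/

import Mathlib

open Set Cardinal

namespace BranchAux

/-- Embedding of `V × ((K → Option E)) × ℝ` into `ℝ` for countable `V, K, E`. -/
lemma exists_embed (V K E : Type*) [Countable V] [Countable K] [Countable E] :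
    ∃ ι : V × (K → Option E) × ℝ → ℝ, Function.Injective ι := by
  classical
  obtain ⟨ν, hν⟩ := Countable.exists_injective_nat V
  obtain ⟨κ, hκ⟩ := Countable.exists_injective_nat K
  obtain ⟨ε, hε⟩ := Countable.exists_injective_nat (Option E)
  set G : V × (K → Option E) × ℝ → (ℕ → ℕ) × ℝ :=
    fun p => (fun n => Nat.pair (ν p.1) (if h : ∃ k, κ k = n then ε (p.2.1 h.choose) else 0),
              p.2.2) with hG
  have hGinj : Function.Injective G := by
    rintro ⟨v, x, t⟩ ⟨v', x', t'⟩ hp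
    simp only [hG, Prod.mk.injEq] at hp
    obtain ⟨h1, h2⟩ := hp
    have hv : v = v' := by
      have := congrFun h1 0
      exact hν (Nat.pair_eq_pair.mp this).1
    have hx : x = x' := by
      funext k
      have h3 := congrFun h1 (κ k)
      have hex : ∃ k' , κ k' = κ k := ⟨k, rfl⟩
      rw [dif_pos hex, dif_pos hex] at h3
      have hkk : hex.choose = k := hκ hex.choose_spec
      rw [hkk] at h3
      exact hε (Nat.pair_eq_pair.mp h3).2
    exact by simp [hv, hx, h2]
  have hcard : #((ℕ → ℕ) × ℝ) ≤ #ℝ := by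
    rw [mk_real]
    apply le_of_eq
    have h1 : #(ℕ → ℕ) = 𝔠 := by
      rw [← Cardinal.power_def, mk_nat, aleph0_power_aleph0]
    calc #((ℕ → ℕ) × ℝ) = #(ℕ → ℕ) * #ℝ := by
          rw [Cardinal.mk_prod, Cardinal.lift_id, Cardinal.lift_id]
      _ = 𝔠 * 𝔠 := by rw [h1, mk_real]
      _ = 𝔠 := continuum_mul_self
  obtain ⟨g⟩ := (Cardinal.le_def _ _).mp hcard
  exact ⟨g ∘ G, g.injective.comp hGinj⟩

/-- Two subsets of `ℝ` admitting injections from `ℝ` are equinumerous. -/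
lemma set_equiv (T U : Set ℝ) (jT : ℝ → T) (hjT : Function.Injective jT)
    (jU : ℝ → U) (hjU : Function.Injective jU) : Nonempty (T ≃ U) := by
  rw [← Cardinal.eq]
  have h : ∀ (W : Set ℝ) (j : ℝ → W), Function.Injective j → #W = 𝔠 := by
    intro W j hj
    refine le_antisymm (mk_real ▸ mk_set_le W) ?_
    rw [← mk_real]
    exact Cardinal.mk_le_of_injective hj
  rw [h T jT hjT, h U jU hjU]

variable {V E : Type*}

/-- Validity of a choice function at vertex `v`. -/
def Valid (s : E → V) (C S : Set (Set E)) (v : V)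
    (x : {Y : Set E // Y ∈ C} → Option E) : Prop :=
  ∀ Y : {Y : Set E // Y ∈ C},
    (∀ e, x Y = some e → e ∈ Y.1) ∧ ((Y.1 ∈ S ∧ ∀ e ∈ Y.1, s e = v) → x Y ≠ none)

/-- Abstract domain set. -/
def DD (s : E → V) (C S : Set (Set E)) (v : V) :
    Set (V × ({Y : Set E // Y ∈ C} → Option E) × ℝ) :=
  {p | p.1 = v ∧ Valid s C S v p.2.1}

/-- The class containing an edge. -/
noncomputable def cls (C : Set (Set E)) (hC4 : ∀ e : E, ∃ Y ∈ C, e ∈ Y) (e : E) :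
    {Y : Set E // Y ∈ C} := ⟨(hC4 e).choose, (hC4 e).choose_spec.1⟩

lemma cls_mem (C : Set (Set E)) (hC4 : ∀ e : E, ∃ Y ∈ C, e ∈ Y) (e : E) :
    e ∈ (cls C hC4 e).1 := (hC4 e).choose_spec.2

/-- Two classes sharing an element are equal. -/
lemma class_eq {C : Set (Set E)} (hC3 : ∀ Y ∈ C, ∀ Z ∈ C, Y ≠ Z → Disjoint Y Z)
    {Y Z : Set E} (hY : Y ∈ C) (hZ : Z ∈ C) {e : E} (heY : e ∈ Y) (heZ : e ∈ Z) : Y = Z := by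
  by_contra h
  exact Set.disjoint_left.mp (hC3 Y hY Z hZ h) heY heZ

lemma cls_eq {C : Set (Set E)} (hC3 : ∀ Y ∈ C, ∀ Z ∈ C, Y ≠ Z → Disjoint Y Z)
    (hC4 : ∀ e : E, ∃ Y ∈ C, e ∈ Y) {Y : Set E} (hY : Y ∈ C) {e : E} (heY : e ∈ Y) :
    (cls C hC4 e).1 = Y :=
  class_eq hC3 (cls C hC4 e).2 hY (cls_mem C hC4 e) heY

/-- Abstract range set of an edge. -/
def RR (s : E → V) (C S : Set (Set E)) (hC4 : ∀ e : E, ∃ Y ∈ C, e ∈ Y) (e : E) :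
    Set (V × ({Y : Set E // Y ∈ C} → Option E) × ℝ) :=
  {p | p ∈ DD s C S (s e) ∧ p.2.1 (cls C hC4 e) = some e}

/-- Default valid choice function. -/
noncomputable def xzero (C : Set (Set E)) (hC1 : ∀ Y ∈ C, Y.Nonempty)
    (Y : {Y : Set E // Y ∈ C}) : Option E := some (hC1 Y.1 Y.2).choose

lemma xzero_valid (s : E → V) (C S : Set (Set E)) (hC1 : ∀ Y ∈ C, Y.Nonempty) (v : V) :
    Valid s C S v (xzero C hC1) := by
  intro Y
  constructor
  · intro e he
    rw [xzero, Option.some_inj] at he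
    rw [← he]
    exact (hC1 Y.1 Y.2).choose_spec
  · intro _ h
    rw [xzero] at h
    exact Option.some_ne_none _ h

end BranchAux




/-- Remark 3.2: The branching system constructed in Theorem 3.1 has the
following property: if `X₁, …, Xₙ, …, Xₘ ∈ C_v` are pairwise distinct classes with
`X_{n+1}, …, Xₘ ∉ S` and `e_i ∈ X_i` for `1 ≤ i ≤ n`, then
`R_{e₁} ∩ … ∩ R_{eₙ} ∩ (D_v \ ⋃_{e∈X_{n+1}} R_e) ∩ … ∩ (D_v \ ⋃_{e∈Xₘ} R_e) ≠ ∅`.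
We state this as: there exists a branching system (as in Theorem 3.1) with this extra
property. -/
theorem exists_branching_system_remark
    (V E : Type*) [Countable V] [Countable E] (r s : E → V)
    (C : Set (Set E))
    (hC1 : ∀ Y ∈ C, Y.Nonempty)
    (hC2 : ∀ Y ∈ C, ∀ e ∈ Y, ∀ f ∈ Y, s e = s f)
    (hC3 : ∀ Y ∈ C, ∀ Z ∈ C, Y ≠ Z → Disjoint Y Z)
    (hC4 : ∀ e : E, ∃ Y ∈ C, e ∈ Y)
    (S : Set (Set E)) (hSC : S ⊆ C) (hSfin : ∀ X ∈ S, X.Finite) :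
    ∃ (𝕏 : Set ℝ) (R : E → Set ℝ) (D : V → Set ℝ) (f : E → ℝ → ℝ),
      (∀ e, R e ⊆ 𝕏) ∧ (∀ v, D v ⊆ 𝕏) ∧
      -- the branching-system conditions of Definition 2.1
      (∀ Y ∈ C, ∀ e ∈ Y, ∀ d ∈ Y, e ≠ d → Disjoint (R e) (R d)) ∧
      (∀ u v : V, u ≠ v → Disjoint (D u) (D v)) ∧
      (∀ e, R e ⊆ D (s e)) ∧
      (∀ Y ∈ S, ∀ v : V, (∀ e ∈ Y, s e = v) → D v = ⋃ e ∈ Y, R e) ∧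
      (∀ e, Set.BijOn (f e) (D (r e)) (R e)) ∧
      -- Remark 3.2
      (∀ (n m : ℕ), n ≤ m → ∀ (Xs : Fin m → Set E) (v : V),
        (∀ i, Xs i ∈ C) → Function.Injective Xs →
        (∀ i, ∀ e ∈ Xs i, s e = v) →
        (∀ i : Fin m, n ≤ (i : ℕ) → Xs i ∉ S) →
        ∀ es : Fin m → E, (∀ i : Fin m, (i : ℕ) < n → es i ∈ Xs i) →
        ((⋂ i ∈ {i : Fin m | (i : ℕ) < n}, R (es i)) ∩
          ⋂ i ∈ {i : Fin m | n ≤ (i : ℕ)}, (D v \ ⋃ e ∈ Xs i, R e)).Nonempty) := by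
  classical
  have hKcount : Countable {Y : Set E // Y ∈ C} := by
    have hinj : Function.Injective (fun Y : {Y : Set E // Y ∈ C} => (hC1 Y.1 Y.2).choose) := by
      intro Y Z h
      have h2 : (hC1 Y.1 Y.2).choose = (hC1 Z.1 Z.2).choose := h
      have hmem : (hC1 Y.1 Y.2).choose ∈ Z.1 := by
        rw [h2]; exact (hC1 Z.1 Z.2).choose_spec
      exact Subtype.ext (BranchAux.class_eq hC3 Y.2 Z.2 (hC1 Y.1 Y.2).choose_spec hmem)
    exact hinj.countable
  obtain ⟨ι, hι⟩ := BranchAux.exists_embed V {Y : Set E // Y ∈ C} E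
  -- injections from ℝ into the images
  have keyD : ∀ v : V, ∃ j : ℝ → ↥(ι '' BranchAux.DD s C S v), Function.Injective j := by
    intro v
    refine ⟨fun t => ⟨ι (v, BranchAux.xzero C hC1, t),
      Set.mem_image_of_mem ι ⟨rfl, BranchAux.xzero_valid s C S hC1 v⟩⟩, ?_⟩
    intro t t' h
    have := hι (Subtype.ext_iff.mp h)
    exact congrArg (fun p => p.2.2) this
  have keyR : ∀ e : E, ∃ j : ℝ → ↥(ι '' BranchAux.RR s C S hC4 e), Function.Injective j := by
    intro e
    set xe : {Y : Set E // Y ∈ C} → Option E :=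
      fun Y => if Y = BranchAux.cls C hC4 e then some e else BranchAux.xzero C hC1 Y with hxe
    have hval : ∀ v, BranchAux.Valid s C S v xe := by
      intro v Y
      by_cases h : Y = BranchAux.cls C hC4 e
      · constructor
        · intro d hd
          rw [hxe] at hd
          simp only [if_pos h, Option.some_inj] at hd
          rw [← hd, h]
          exact BranchAux.cls_mem C hC4 e
        · intro _
          rw [hxe]
          simp only [if_pos h]
          exact Option.some_ne_none _
      · have h0 := BranchAux.xzero_valid s C S hC1 v Y
        constructor
        · intro d hd
          rw [hxe] at hd
          simp only [if_neg h] at hd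
          exact h0.1 d hd
        · intro hy
          rw [hxe]
          simp only [if_neg h]
          exact h0.2 hy
    refine ⟨fun t => ⟨ι (s e, xe, t), Set.mem_image_of_mem ι ⟨⟨rfl, hval (s e)⟩, ?_⟩⟩, ?_⟩
    · simp [hxe]
    · intro t t' h
      have := hι (Subtype.ext_iff.mp h)
      exact congrArg (fun p => p.2.2) this
  have keyEq : ∀ e : E,
      Nonempty (↥(ι '' BranchAux.DD s C S (r e)) ≃ ↥(ι '' BranchAux.RR s C S hC4 e)) := by
    intro e
    obtain ⟨jD, hjD⟩ := keyD (r e)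
    obtain ⟨jR, hjR⟩ := keyR e
    exact BranchAux.set_equiv _ _ jD hjD jR hjR
  have φ := fun e => Classical.choice (keyEq e)
  refine ⟨Set.range ι, fun e => ι '' BranchAux.RR s C S hC4 e,
    fun v => ι '' BranchAux.DD s C S v,
    fun e t => if h : t ∈ ι '' BranchAux.DD s C S (r e) then ((φ e) ⟨t, h⟩ : ℝ) else t,
    ?_, ?_, ?_, ?_, ?_, ?_, ?_, ?_⟩
  · intro e
    exact Set.image_subset_range ι _
  · intro v
    exact Set.image_subset_range ι _
  · -- disjointness of R's within a class
    intro Y hY e he d hd hed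
    rw [Set.disjoint_image_iff hι]
    rw [Set.disjoint_left]
    intro p hpe hpd
    have h1 : p.2.1 (BranchAux.cls C hC4 e) = some e := hpe.2
    have h2 : p.2.1 (BranchAux.cls C hC4 d) = some d := hpd.2
    have hcl : BranchAux.cls C hC4 e = BranchAux.cls C hC4 d :=
      Subtype.ext ((BranchAux.cls_eq hC3 hC4 hY he).trans (BranchAux.cls_eq hC3 hC4 hY hd).symm)
    rw [hcl, h2, Option.some_inj] at h1
    exact hed h1.symm
  · -- disjointness of D's
    intro u v huv
    rw [Set.disjoint_image_iff hι, Set.disjoint_left]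
    intro p hpu hpv
    exact huv (hpu.1.symm.trans hpv.1)
  · -- R e ⊆ D (s e)
    intro e
    exact Set.image_mono (fun p hp => hp.1)
  · -- saturation on S
    intro Y hY v hv
    have hYC := hSC hY
    have habs : BranchAux.DD s C S v = ⋃ e ∈ Y, BranchAux.RR s C S hC4 e := by
      ext p
      constructor
      · rintro ⟨hp1, hp2⟩
        have hne := (hp2 ⟨Y, hYC⟩).2 ⟨hY, hv⟩
        obtain ⟨e, he⟩ := Option.ne_none_iff_exists'.mp hne
        have heY : e ∈ Y := (hp2 ⟨Y, hYC⟩).1 e he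
        refine Set.mem_iUnion₂.mpr ⟨e, heY, ⟨?_, ?_⟩⟩
        · rw [hv e heY]
          exact ⟨hp1, hp2⟩
        · have hcl : BranchAux.cls C hC4 e = ⟨Y, hYC⟩ :=
            Subtype.ext (BranchAux.cls_eq hC3 hC4 hYC heY)
          rw [hcl]
          exact he
      · intro hp
        obtain ⟨e, heY, hpe⟩ := Set.mem_iUnion₂.mp hp
        have h := hpe.1
        rw [hv e heY] at h
        exact h
    show ι '' BranchAux.DD s C S v = ⋃ e ∈ Y, ι '' BranchAux.RR s C S hC4 e
    rw [habs]
    exact Set.image_iUnion₂ _ _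
  · -- bijections
    intro e
    set DDe := ι '' BranchAux.DD s C S (r e) with hDDe
    set RRe := ι '' BranchAux.RR s C S hC4 e with hRRe
    refine ⟨?_, ?_, ?_⟩
    · intro t ht
      simp only [dif_pos ht]
      exact ((φ e) ⟨t, ht⟩).2
    · intro t ht t' ht' h
      simp only [dif_pos ht, dif_pos ht'] at h
      have := (φ e).injective (Subtype.ext h)
      exact Subtype.ext_iff.mp this
    · intro y hy
      refine ⟨((φ e).symm ⟨y, hy⟩ : ℝ), ((φ e).symm ⟨y, hy⟩).2, ?_⟩
      have hmem := ((φ e).symm ⟨y, hy⟩).2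
      simp only [dif_pos hmem]
      have : (⟨((φ e).symm ⟨y, hy⟩ : ℝ), hmem⟩ : ↥DDe) = (φ e).symm ⟨y, hy⟩ :=
        Subtype.ext rfl
      rw [this, Equiv.apply_symm_apply]
  · -- Remark 3.2
    intro n m hnm Xs v hXC hXinj hXsrc hXS es hes
    set xw : {Y : Set E // Y ∈ C} → Option E :=
      fun Y => if h : ∃ i : Fin m, Y.1 = Xs i then
        (if (h.choose : ℕ) < n then some (es h.choose) else none)
      else BranchAux.xzero C hC1 Y with hxw
    have hchoose : ∀ (Y : {Y : Set E // Y ∈ C}) (h : ∃ i : Fin m, Y.1 = Xs i) (i : Fin m),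
        Y.1 = Xs i → h.choose = i := by
      intro Y h i hi
      exact hXinj (h.choose_spec.symm.trans hi)
    have hpos : ∀ (Y : {Y : Set E // Y ∈ C}) (i : Fin m), Y.1 = Xs i →
        xw Y = if (i : ℕ) < n then some (es i) else none := by
      intro Y i hi
      have hex : ∃ j : Fin m, Y.1 = Xs j := ⟨i, hi⟩
      have h1 : xw Y = if (hex.choose : ℕ) < n then some (es hex.choose) else none :=
        dif_pos hex
      rw [h1, hchoose Y hex i hi]
    have hneg : ∀ (Y : {Y : Set E // Y ∈ C}), (¬ ∃ i : Fin m, Y.1 = Xs i) →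
        xw Y = BranchAux.xzero C hC1 Y := fun Y h => dif_neg h
    have hvalid : BranchAux.Valid s C S v xw := by
      intro Y
      by_cases h : ∃ i : Fin m, Y.1 = Xs i
      · obtain ⟨i, hi⟩ := h
        have heval := hpos Y i hi
        by_cases hin : (i : ℕ) < n
        · rw [if_pos hin] at heval
          constructor
          · intro d hd
            rw [heval, Option.some_inj] at hd
            rw [← hd, hi]
            exact hes i hin
          · intro _
            rw [heval]
            exact Option.some_ne_none _
        · rw [if_neg hin] at heval
          constructor
          · intro d hd
            rw [heval] at hd
            exact absurd hd (by simp)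
          · intro hYS
            exact absurd (hi ▸ hYS.1) (hXS i (le_of_not_gt hin))
      · have h0 := BranchAux.xzero_valid s C S hC1 v Y
        have heval := hneg Y h
        constructor
        · intro d hd
          rw [heval] at hd
          exact h0.1 d hd
        · intro hy
          rw [heval]
          exact h0.2 hy
    refine ⟨ι (v, xw, 0), ?_, ?_⟩
    · refine Set.mem_iInter₂.mpr ?_
      intro i hi
      refine Set.mem_image_of_mem ι ?_
      have hsrc : s (es i) = v := hXsrc i (es i) (hes i hi)
      refine ⟨?_, ?_⟩
      · show ((v, xw, (0:ℝ)) : V × _ × ℝ) ∈ BranchAux.DD s C S (s (es i))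
        rw [hsrc]
        exact ⟨rfl, hvalid⟩
      · have hclY : (BranchAux.cls C hC4 (es i)).1 = Xs i :=
          BranchAux.cls_eq hC3 hC4 (hXC i) (hes i hi)
        show xw (BranchAux.cls C hC4 (es i)) = some (es i)
        rw [hpos _ i hclY, if_pos (show (i:ℕ) < n from hi)]
    · refine Set.mem_iInter₂.mpr ?_
      intro i hi
      refine ⟨Set.mem_image_of_mem ι ⟨rfl, hvalid⟩, ?_⟩
      intro hmem
      obtain ⟨e, heXi, hmem2⟩ := Set.mem_iUnion₂.mp hmem
      obtain ⟨p, hp, hpeq⟩ := hmem2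
      have hpq : p = (v, xw, 0) := hι hpeq
      rw [hpq] at hp
      have h2 : xw (BranchAux.cls C hC4 e) = some e := hp.2
      have hclY : (BranchAux.cls C hC4 e).1 = Xs i :=
        BranchAux.cls_eq hC3 hC4 (hXC i) heXi
      rw [hpos _ i hclY, if_neg (not_lt_of_ge (show n ≤ (i:ℕ) from hi))] at h2
      exact absurd h2 (by simp)
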